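/- Let n be an integer with n > 2. Then the Chebyshev polynomial U_{n−1}, viewed as a real function, is strictly monotone increasing on the interval [cos(π/(n−1)), ∞) and maps this interval onto [−1, ∞). For n = 2, U_1 is strictly monotone increasing on [cos π, ∞) = [−1, ∞) and maps it onto [−2, ∞). Furthermore, for every integer n ≥ 2, U_{n−1}(cos(π/n)) = 0 and U_{n−1}(1) = n. -/

import Mathlib

open Real Finset Filter

noncomputable def cT (k : ℤ) (x : ℝ) : ℝ := (Polynomial.Chebyshev.T ℝ k).eval x

noncomputable def cU (k : ℤ) (x : ℝ) : ℝ := (Polynomial.Chebyshev.U ℝ k).eval x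

section Helpers
open Polynomial.Chebyshev

lemma cU_add_two (k : ℤ) (x : ℝ) : cU (k+2) x = 2*x*cU (k+1) x - cU k x := by
  simp [cU, U_add_two]

lemma cU_zero (x : ℝ) : cU 0 x = 1 := by simp [cU]
lemma cU_one (x : ℝ) : cU 1 x = 2*x := by simp [cU, U_one]

lemma cU_cos (k : ℤ) (θ : ℝ) : cU k (Real.cos θ) * Real.sin θ = Real.sin ((k+1)*θ) :=
  U_real_cos θ k

lemma cU_nat_one (k : ℕ) : cU k 1 = k + 1 := by
  induction k using Nat.twoStepInduction with
  | zero => simp [cU_zero]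
  | one => norm_num [cU_one]
  | more k ih1 ih2 =>
    have e : ((k+2:ℕ):ℤ) = (k:ℤ)+2 := by push_cast; ring
    have e1 : ((k+1:ℕ):ℤ) = (k:ℤ)+1 := by push_cast; ring
    rw [e, cU_add_two, ← e1, ih1, ih2]
    push_cast; ring

lemma invariant (k : ℕ) :
    (∀ x : ℝ, 1 ≤ x → 0 < cU k x) ∧ MonotoneOn (cU k) (Set.Ici 1) ∧
    (∀ x : ℝ, 1 ≤ x → 0 ≤ cU (k+1) x - cU k x) ∧
    StrictMonoOn (fun x => cU ((k:ℤ)+1) x - cU k x) (Set.Ici 1) ∧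
    (∀ x : ℝ, 1 ≤ x → x ≤ cU ((k:ℤ)+1) x) := by
  induction k with
  | zero =>
    have e0 : ((0:ℕ):ℤ) = 0 := by norm_num
    have e1 : ((0:ℕ):ℤ)+1 = 1 := by norm_num
    refine ⟨fun x hx => by norm_num [cU_zero, cU_one] <;> linarith,
      fun x _ y _ _ => by norm_num [cU_zero, cU_one] <;> linarith,
      fun x hx => by norm_num [cU_zero, cU_one] <;> linarith,
      fun x _ y _ hxy => by norm_num [cU_zero, cU_one] <;> linarith,
      fun x hx => by norm_num [cU_zero, cU_one] <;> linarith⟩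
  | succ k ih =>
    obtain ⟨hpos, hmono, hdnn, hdstrict, hge⟩ := ih
    have ek : ((k+1:ℕ):ℤ) = (k:ℤ)+1 := by push_cast; ring
    have hrec : ∀ x : ℝ, cU ((k:ℤ)+2) x = 2*x*cU ((k:ℤ)+1) x - cU k x :=
      fun x => cU_add_two k x
    -- positivity and monotonicity of cU (k+1)
    have hpos1 : ∀ x : ℝ, 1 ≤ x → 0 < cU ((k:ℤ)+1) x := by
      intro x hx; have := hpos x hx; have := hdnn x hx; linarith
    have hmono1 : MonotoneOn (cU ((k:ℤ)+1)) (Set.Ici 1) := by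
      intro x hx y hy hxy
      rcases eq_or_lt_of_le hxy with rfl | h
      · exact le_rfl
      · have h1 := hmono hx hy hxy
        have h2 := (hdstrict hx hy h).le
        simp only at h2; linarith
    refine ⟨?_, ?_, ?_, ?_, ?_⟩
    · intro x hx; rw [ek]; exact hpos1 x hx
    · intro x hx y hy hxy; rw [ek]; exact hmono1 hx hy hxy
    · intro x hx
      rw [show ((k+1:ℕ):ℤ)+1 = (k:ℤ)+2 by push_cast; ring, ek, hrec x]
      have := hpos1 x hx
      have := hdnn x hx
      nlinarith
    · intro x hx y hy hxy
      have e2 : ((k:ℤ)+1)+1 = (k:ℤ)+2 := by ring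
      simp only [ek, e2, hrec]
      have h1 := hdstrict hx hy hxy
      simp only at h1
      have h2 := hpos1 x hx
      have h3 := hpos1 y (le_trans hx hxy.le)
      have h4 := hmono1 hx (Set.mem_Ici.2 (le_trans hx hxy.le)) hxy.le
      have hx1 : (1:ℝ) ≤ x := hx
      nlinarith
    · intro x hx
      rw [show ((k+1:ℕ):ℤ)+1 = (k:ℤ)+2 by push_cast; ring, hrec x]
      have := hge x hx
      have := hpos x hx
      have := hpos1 x hx
      have := hdnn x hx
      nlinarith

lemma strictMono_Ici_one (k : ℕ) : StrictMonoOn (cU ((k:ℤ)+1)) (Set.Ici 1) := by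
  obtain ⟨hpos, hmono, hdnn, hdstrict, hge⟩ := invariant k
  intro x hx y hy hxy
  have h1 := hmono hx hy hxy.le
  have h2 := hdstrict hx hy hxy
  simp only at h2
  linarith

lemma cU_ge_id (k : ℕ) : ∀ x : ℝ, 1 ≤ x → x ≤ cU ((k:ℤ)+1) x := (invariant k).2.2.2.2


section PartA
variable (m : ℕ)

-- derivative of h α = m cos(mα) sin α − sin(mα) cos α
noncomputable def hh (α : ℝ) : ℝ :=
  (m:ℝ) * (Real.cos (m*α) * Real.sin α) - Real.sin (m*α) * Real.cos α

lemma hasDerivAt_sin_mul (α : ℝ) :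
    HasDerivAt (fun x => Real.sin ((m:ℝ)*x)) (Real.cos ((m:ℝ)*α) * m) α := by
  have h1 : HasDerivAt (fun x : ℝ => (m:ℝ)*x) (m:ℝ) α := by
    simpa using (hasDerivAt_id α).const_mul (m:ℝ)
  simpa [Function.comp_def] using (Real.hasDerivAt_sin ((m:ℝ)*α)).comp α h1

lemma hasDerivAt_cos_mul (α : ℝ) :
    HasDerivAt (fun x => Real.cos ((m:ℝ)*x)) (-Real.sin ((m:ℝ)*α) * m) α := by
  have h1 : HasDerivAt (fun x : ℝ => (m:ℝ)*x) (m:ℝ) α := by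
    simpa using (hasDerivAt_id α).const_mul (m:ℝ)
  simpa [Function.comp_def] using (Real.hasDerivAt_cos ((m:ℝ)*α)).comp α h1

lemma hasDerivAt_hh (α : ℝ) :
    HasDerivAt (hh m) ((1-(m:ℝ)^2) * Real.sin (m*α) * Real.sin α) α := by
  have h1 := hasDerivAt_sin_mul m α
  have h2 := hasDerivAt_cos_mul m α
  have := (((h2.mul (Real.hasDerivAt_sin α)).const_mul ((m:ℝ))).sub
    (h1.mul (Real.hasDerivAt_cos α)))
  exact this.congr_deriv (by ring)

lemma hh_neg (hm : 3 ≤ m) : ∀ α ∈ Set.Ioo 0 (π/((m:ℝ)-1)), hh m α < 0 := by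
  have hm1 : (1:ℝ) ≤ (m:ℝ) - 1 := by
    have : (3:ℝ) ≤ m := by exact_mod_cast hm
    linarith
  have hm2 : (2:ℝ) ≤ (m:ℝ) - 1 := by
    have : (3:ℝ) ≤ m := by exact_mod_cast hm
    linarith
  have hmpos : (0:ℝ) < m := by positivity
  set β := π/((m:ℝ)-1) with hβ
  have hβpos : 0 < β := by positivity
  have hβle : β ≤ π/2 := by
    rw [hβ, div_le_div_iff₀ (by linarith) (by norm_num)]
    nlinarith [Real.pi_pos]
  have hπm : π/(m:ℝ) < β := by
    rw [hβ, div_lt_div_iff₀ hmpos (by linarith)]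
    nlinarith [Real.pi_pos]
  have hπmpos : 0 < π/(m:ℝ) := by positivity
  have hmβ : (m:ℝ) * β = π + β := by
    rw [hβ]; field_simp; ring
  -- h is strictly decreasing on [0, π/m]
  have hanti : StrictAntiOn (hh m) (Set.Icc 0 (π/(m:ℝ))) := by
    apply strictAntiOn_of_deriv_neg (convex_Icc _ _)
      (fun α _ => ((hasDerivAt_hh m α).continuousAt).continuousWithinAt)
    intro x hx
    rw [interior_Icc] at hx
    rw [(hasDerivAt_hh m x).deriv]
    have hs1 : 0 < Real.sin ((m:ℝ)*x) := by
      apply Real.sin_pos_of_pos_of_lt_pi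
      · exact mul_pos hmpos hx.1
      · calc (m:ℝ)*x < (m:ℝ)*(π/(m:ℝ)) := by
              exact mul_lt_mul_of_pos_left hx.2 hmpos
          _ = π := by field_simp
    have hs2 : 0 < Real.sin x := by
      apply Real.sin_pos_of_pos_of_lt_pi hx.1
      calc x < π/(m:ℝ) := hx.2
        _ ≤ π := div_le_self (le_of_lt Real.pi_pos) (by exact_mod_cast Nat.one_le_of_lt hm)
    have h3 : (1-(m:ℝ)^2) < 0 := by nlinarith
    have h4 := mul_pos hs1 hs2
    nlinarith
  -- h is strictly increasing on [π/m, β]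
  have hmono : StrictMonoOn (hh m) (Set.Icc (π/(m:ℝ)) β) := by
    apply strictMonoOn_of_deriv_pos (convex_Icc _ _)
      (fun α _ => ((hasDerivAt_hh m α).continuousAt).continuousWithinAt)
    intro x hx
    rw [interior_Icc] at hx
    rw [(hasDerivAt_hh m x).deriv]
    have hx1 : π < (m:ℝ)*x := by
      have := (div_lt_iff₀ hmpos).1 hx.1
      linarith
    have hx2 : (m:ℝ)*x < π + β := by
      rw [← hmβ]
      exact mul_lt_mul_of_pos_left hx.2 hmpos
    have hs1 : Real.sin ((m:ℝ)*x) < 0 := by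
      have e : Real.sin ((m:ℝ)*x) = -Real.sin ((m:ℝ)*x - π) := by
        rw [Real.sin_sub_pi]; ring
      rw [e, neg_lt, neg_zero]
      apply Real.sin_pos_of_pos_of_lt_pi (by linarith)
      have := Real.pi_pos
      linarith [hβle]
    have hs2 : 0 < Real.sin x := by
      apply Real.sin_pos_of_pos_of_lt_pi
      · linarith [hπmpos, hx.1]
      · have := Real.pi_pos
        linarith [hx.2, hβle]
    have h3 : (1-(m:ℝ)^2) < 0 := by nlinarith
    have h4 := mul_pos (neg_pos.2 hs1) hs2
    nlinarith
  -- value at β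
  have hhβ : hh m β ≤ 0 := by
    have e : hh m β = (1-(m:ℝ)) * (Real.sin β * Real.cos β) := by
      unfold hh
      rw [hmβ, Real.cos_add, Real.sin_add, Real.cos_pi, Real.sin_pi]
      ring
    have hsβ : 0 < Real.sin β := by
      apply Real.sin_pos_of_pos_of_lt_pi hβpos
      have := Real.pi_pos; linarith
    have hcβ : 0 ≤ Real.cos β := Real.cos_nonneg_of_mem_Icc ⟨by linarith, hβle⟩
    have : (1-(m:ℝ)) ≤ 0 := by
      have : (3:ℝ) ≤ m := by exact_mod_cast hm
      linarith
    rw [e]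
    exact mul_nonpos_of_nonpos_of_nonneg this (by positivity)
  -- combine
  intro α hα
  rcases le_or_gt α (π/(m:ℝ)) with h | h
  · have h0 : hh m 0 = 0 := by unfold hh; simp
    have := hanti (Set.mem_Icc.2 ⟨le_rfl, hπmpos.le⟩)
      (Set.mem_Icc.2 ⟨hα.1.le, h⟩) hα.1
    linarith
  · have := hmono (Set.mem_Icc.2 ⟨h.le, hα.2.le⟩)
      (Set.mem_Icc.2 ⟨hπm.le, le_rfl⟩) hα.2
    linarith

-- strict antitonicity of α ↦ U_{m-1}(cos α) on [0, π/(m-1)]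
lemma g_anti (hm : 3 ≤ m) :
    StrictAntiOn (fun α => cU ((m:ℤ)-1) (Real.cos α)) (Set.Icc 0 (π/((m:ℝ)-1))) := by
  set p := Polynomial.Chebyshev.U ℝ ((m:ℤ)-1) with hp
  have hgd : ∀ α : ℝ, HasDerivAt (fun t => cU ((m:ℤ)-1) (Real.cos t))
      ((p.derivative.eval (Real.cos α)) * (-Real.sin α)) α := by
    intro α
    exact (p.hasDerivAt (Real.cos α)).comp α (Real.hasDerivAt_cos α)
  have hid : ∀ α : ℝ, p.eval (Real.cos α) * Real.sin α = Real.sin ((m:ℝ)*α) := by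
    intro α
    rw [hp, U_real_cos]
    congr 1
    push_cast
    ring
  have hkey : ∀ α : ℝ,
      (p.derivative.eval (Real.cos α)) * (-Real.sin α) * Real.sin α
        + p.eval (Real.cos α) * Real.cos α = Real.cos ((m:ℝ)*α) * m := by
    intro α
    have hF : HasDerivAt (fun t => p.eval (Real.cos t) * Real.sin t)
        ((p.derivative.eval (Real.cos α)) * (-Real.sin α) * Real.sin α
          + p.eval (Real.cos α) * Real.cos α) α :=
      (hgd α).mul (Real.hasDerivAt_sin α)
    have hFeq : (fun t => p.eval (Real.cos t) * Real.sin t)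
        = (fun t => Real.sin ((m:ℝ)*t)) := funext hid
    rw [hFeq] at hF
    exact hF.unique (hasDerivAt_sin_mul m α)
  have hm1 : (1:ℝ) ≤ (m:ℝ) - 1 := by
    have : (3:ℝ) ≤ m := by exact_mod_cast hm
    linarith
  set β := π/((m:ℝ)-1) with hβ
  have hβpos : 0 < β := by positivity
  apply strictAntiOn_of_deriv_neg (convex_Icc _ _)
  · apply Continuous.continuousOn
    exact (p.continuous).comp Real.continuous_cos
  · intro x hx
    rw [interior_Icc] at hx
    rw [(hgd x).deriv]
    have hsx : 0 < Real.sin x := by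
      apply Real.sin_pos_of_pos_of_lt_pi hx.1
      have := Real.pi_pos
      have hβle : β ≤ π := by
        rw [hβ]
        exact (div_le_self Real.pi_pos.le hm1).trans le_rfl
      linarith [hx.2]
    have hneg := hh_neg m hm x hx
    have h1 := hkey x
    have h2 := hid x
    have hval : (p.derivative.eval (Real.cos x)) * (-Real.sin x) * (Real.sin x * Real.sin x)
        = hh m x := by
      unfold hh
      linear_combination Real.sin x * h1 - Real.cos x * h2
    nlinarith [mul_pos hsx hsx, hval, hneg]

end PartA


lemma beta_mem (m : ℕ) (hm : 3 ≤ m) :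
    0 < π/((m:ℝ)-1) ∧ π/((m:ℝ)-1) ≤ π/2 := by
  have h3 : (3:ℝ) ≤ m := by exact_mod_cast hm
  constructor
  · apply div_pos Real.pi_pos; linarith
  · apply div_le_div_of_nonneg_left Real.pi_pos.le (by norm_num) (by linarith)

lemma mono_Icc (m : ℕ) (hm : 3 ≤ m) :
    StrictMonoOn (cU ((m:ℤ)-1)) (Set.Icc (Real.cos (π/((m:ℝ)-1))) 1) := by
  obtain ⟨hβpos, hβle⟩ := beta_mem m hm
  set β := π/((m:ℝ)-1) with hβ
  have hβπ : β ≤ π := hβle.trans (by linarith [Real.pi_pos])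
  have hg := g_anti m hm
  intro x hx y hy hxy
  have hx1 : x ∈ Set.Icc (-1:ℝ) 1 := ⟨(Real.neg_one_le_cos β).trans hx.1, hx.2⟩
  have hy1 : y ∈ Set.Icc (-1:ℝ) 1 := ⟨(Real.neg_one_le_cos β).trans hy.1, hy.2⟩
  have hβmem : Real.cos β ∈ Set.Icc (-1:ℝ) 1 := ⟨Real.neg_one_le_cos β, Real.cos_le_one β⟩
  have haβ : Real.arccos x ≤ β := by
    have := Real.strictAntiOn_arccos.antitoneOn hβmem hx1 hx.1
    rwa [Real.arccos_cos hβpos.le hβπ] at this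
  have hbβ : Real.arccos y ≤ β := by
    have := Real.strictAntiOn_arccos.antitoneOn hβmem hy1 hy.1
    rwa [Real.arccos_cos hβpos.le hβπ] at this
  have hba : Real.arccos y < Real.arccos x := Real.strictAntiOn_arccos hx1 hy1 hxy
  have := hg (Set.mem_Icc.2 ⟨Real.arccos_nonneg y, hbβ⟩)
    (Set.mem_Icc.2 ⟨Real.arccos_nonneg x, haβ⟩) hba
  simpa [Real.cos_arccos hx1.1 hx1.2, Real.cos_arccos hy1.1 hy1.2] using this

lemma strictMono_Ici_one' (m : ℕ) (hm : 2 ≤ m) :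
    StrictMonoOn (cU ((m:ℤ)-1)) (Set.Ici 1) := by
  have e : ((m-2:ℕ):ℤ)+1 = (m:ℤ)-1 := by
    have : ((m-2:ℕ):ℤ) = (m:ℤ)-2 := by
      rw [Nat.cast_sub hm]; norm_num
    rw [this]; ring
  have := strictMono_Ici_one (m-2)
  rwa [e] at this

lemma cU_ge_id' (m : ℕ) (hm : 2 ≤ m) : ∀ x : ℝ, 1 ≤ x → x ≤ cU ((m:ℤ)-1) x := by
  have e : ((m-2:ℕ):ℤ)+1 = (m:ℤ)-1 := by
    have : ((m-2:ℕ):ℤ) = (m:ℤ)-2 := by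
      rw [Nat.cast_sub hm]; norm_num
    rw [this]; ring
  have := cU_ge_id (m-2)
  rwa [e] at this

lemma mono_Ici (m : ℕ) (hm : 3 ≤ m) :
    StrictMonoOn (cU ((m:ℤ)-1)) (Set.Ici (Real.cos (π/((m:ℝ)-1)))) := by
  have hIcc := mono_Icc m hm
  have hIci1 := strictMono_Ici_one' m (by omega)
  set β := π/((m:ℝ)-1)
  have hc1 : Real.cos β ≤ 1 := Real.cos_le_one β
  intro x hx y hy hxy
  rcases le_or_gt y 1 with h | h
  · exact hIcc ⟨hx, hxy.le.trans h⟩ ⟨hy, h⟩ hxy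
  · rcases le_or_gt 1 x with h2 | h2
    · exact hIci1 h2 (h2.trans hxy.le) hxy
    · calc cU ((m:ℤ)-1) x < cU ((m:ℤ)-1) 1 := hIcc ⟨hx, h2.le⟩ ⟨hc1, le_rfl⟩ h2
        _ < cU ((m:ℤ)-1) y := hIci1 (Set.mem_Ici.2 le_rfl) h.le h

lemma val_left (m : ℕ) (hm : 3 ≤ m) :
    cU ((m:ℤ)-1) (Real.cos (π/((m:ℝ)-1))) = -1 := by
  obtain ⟨hβpos, hβle⟩ := beta_mem m hm
  set β := π/((m:ℝ)-1) with hβ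
  have h3 : (3:ℝ) ≤ m := by exact_mod_cast hm
  have hne : (m:ℝ) - 1 ≠ 0 := by linarith
  have hmβ : (m:ℝ) * β = π + β := by
    have h1 : ((m:ℝ)-1) * β = π := by rw [hβ, mul_comm, div_mul_cancel₀ _ hne]
    linear_combination h1
  have h := U_real_cos β ((m:ℤ)-1)
  have e : ((((m:ℤ)-1 : ℤ) : ℝ)+1) * β = π + β := by
    push_cast
    linear_combination hmβ
  rw [e, Real.sin_add, Real.sin_pi, Real.cos_pi] at h
  have hsβ : Real.sin β ≠ 0 := by
    have : 0 < Real.sin β := Real.sin_pos_of_pos_of_lt_pi hβpos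
      (by linarith [Real.pi_pos])
    linarith
  have : cU ((m:ℤ)-1) (Real.cos β) * Real.sin β = (-1) * Real.sin β := by
    rw [show cU ((m:ℤ)-1) (Real.cos β) = (Polynomial.Chebyshev.U ℝ ((m:ℤ)-1)).eval (Real.cos β) from rfl, h]
    ring
  exact mul_right_cancel₀ hsβ this

lemma image_eq (m : ℕ) (hm : 3 ≤ m) :
    cU ((m:ℤ)-1) '' Set.Ici (Real.cos (π/((m:ℝ)-1))) = Set.Ici (-1) := by
  obtain ⟨hβpos, hβle⟩ := beta_mem m hm
  set β := π/((m:ℝ)-1) with hβ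
  have hmono := mono_Ici m hm
  have hval := val_left m hm
  have hc1 : Real.cos β ≤ 1 := Real.cos_le_one β
  have hcont : Continuous (cU ((m:ℤ)-1)) := by
    unfold cU; exact Polynomial.continuous _
  apply Set.Subset.antisymm
  · rintro _ ⟨x, hx, rfl⟩
    rw [Set.mem_Ici, ← hval]
    rcases eq_or_lt_of_le (Set.mem_Ici.1 hx) with h | h
    · rw [← h]
    · exact (hmono (Set.mem_Ici.2 le_rfl) hx h).le
  · intro y hy
    have hy' : -1 ≤ y := hy
    set b := max 1 y with hb
    have hb1 : (1:ℝ) ≤ b := le_max_left _ _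
    have hbf : y ≤ cU ((m:ℤ)-1) b := (le_max_right 1 y).trans (cU_ge_id' m (by omega) b hb1)
    have hcb : Real.cos β ≤ b := hc1.trans hb1
    have := intermediate_value_Icc hcb (hcont.continuousOn)
    have hmem : y ∈ Set.Icc (cU ((m:ℤ)-1) (Real.cos β)) (cU ((m:ℤ)-1) b) := by
      rw [hval]; exact ⟨hy', hbf⟩
    obtain ⟨x, hx, hxy⟩ := this hmem
    exact ⟨x, Set.mem_Ici.2 hx.1, hxy⟩

end Helpers


noncomputable def x0 (n : ℕ) (u θ : ℝ) : ℝ :=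
  Real.sin (n * θ) / (n * (cT n u - Real.cos (n * θ)))

noncomputable def x1 (n : ℕ) (u θ : ℝ) : ℝ :=
  -(cT ((n : ℤ) - 1) u * Real.sin θ + u * Real.sin (((n : ℝ) - 1) * θ)) /
      (n * (cT n u - Real.cos (n * θ))) +
    ((n : ℝ) - 1) / (n : ℝ) ^ 2 *
      ∑ j ∈ Finset.Icc 1 (n - 1),
        Real.log (u - Real.cos (θ - 2 * π * j / n)) * Real.sin (2 * π * j / n)

noncomputable def x2 (n : ℕ) (u θ : ℝ) : ℝ :=
  (-(cT ((n : ℤ) - 1) u) * Real.cos θ + u * Real.cos (((n : ℝ) - 1) * θ)) /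
      (n * (cT n u - Real.cos (n * θ))) +
    ((n : ℝ) - 1) / (n : ℝ) ^ 2 *
      ∑ j ∈ Finset.range n,
        Real.log (u - Real.cos (θ - 2 * π * j / n)) * Real.cos (2 * π * j / n)

def Omega (n : ℕ) : Set (ℝ × ℝ) :=
  {p | ∀ j < n, Real.cos (p.2 - 2 * π * j / n) < p.1}

theorem stmt3 (n : ℕ) (hn : 2 ≤ n) :
    (2 < n →
      StrictMonoOn (cU ((n : ℤ) - 1)) (Set.Ici (Real.cos (π / ((n : ℝ) - 1)))) ∧
      cU ((n : ℤ) - 1) '' Set.Ici (Real.cos (π / ((n : ℝ) - 1))) = Set.Ici (-1)) ∧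
    (n = 2 →
      StrictMonoOn (cU 1) (Set.Ici (Real.cos π)) ∧
      Set.Ici (Real.cos π) = Set.Ici (-1 : ℝ) ∧
      cU 1 '' Set.Ici (Real.cos π) = Set.Ici (-2)) ∧
    cU ((n : ℤ) - 1) (Real.cos (π / n)) = 0 ∧
    cU ((n : ℤ) - 1) 1 = n := by
  have hn1 : 1 ≤ n := by omega
  refine ⟨?_, ?_, ?_, ?_⟩
  · intro h3
    exact ⟨mono_Ici n (by omega), image_eq n (by omega)⟩
  · rintro rfl
    have e : Real.cos π = -1 := Real.cos_pi
    refine ⟨?_, by rw [e], ?_⟩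
    · intro x _ y _ hxy
      rw [cU_one, cU_one]; linarith
    · rw [e]
      ext z
      simp only [Set.mem_image, Set.mem_Ici]
      constructor
      · rintro ⟨x, hx, hxz⟩
        rw [← hxz, cU_one]; linarith
      · intro hz
        exact ⟨z/2, by linarith, by rw [cU_one]; ring⟩
  · have hn2 : (2:ℝ) ≤ n := by exact_mod_cast hn
    have hne : (n:ℝ) ≠ 0 := by linarith
    have h := Polynomial.Chebyshev.U_real_cos (π/(n:ℝ)) ((n:ℤ)-1)
    have e : ((((n:ℤ)-1 : ℤ):ℝ)+1) * (π/(n:ℝ)) = π := by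
      push_cast
      rw [show ((n:ℝ)-1+1) = (n:ℝ) by ring, mul_comm, div_mul_cancel₀ π hne]
    rw [e, Real.sin_pi] at h
    have hs : Real.sin (π/(n:ℝ)) ≠ 0 := by
      apply ne_of_gt
      apply Real.sin_pos_of_pos_of_lt_pi (by positivity)
      exact div_lt_self Real.pi_pos (by linarith)
    rcases mul_eq_zero.1 h with h' | h'
    · exact h'
    · exact absurd h' hs
  · have e : ((n-1:ℕ):ℤ) = (n:ℤ)-1 := by
      rw [Nat.cast_sub hn1]; norm_num
    have h := cU_nat_one (n-1)
    rw [e] at h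
    rw [h, Nat.cast_sub hn1]
    push_cast
    ring
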